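/- Let A be a real symmetric d×d matrix with μI ⪯ A ⪯ LI for some 0 < μ ≤ L, let α ≥ 0, K ≥ 1, and suppose 0 ≤ γ < 1/(L + α). Let Q := Σ_{k=1}^{K} (I − γ(A + αI))^{k−1} (the distortion matrix with FedAvg weights θ_1 = ⋯ = θ_K = 1). Then φ(μ, α, γ, K) · I ⪯ Q A ⪯ φ(L, α, γ, K) · I, where φ(λ, α, γ, K) := Σ_{k=1}^{K} (1 − γ(λ + α))^{k−1} λ. In particular every eigenvalue χ of QA satisfies φ(μ, α, γ, K) ≤ χ ≤ φ(L, α, γ, K), so the surrogate loss for FedAvg-style updates is φ(L, α, γ, K)-smooth and φ(μ, α, γ, K)-strongly convex with condition number at most φ(L, α, γ, K)/φ(μ, α, γ, K). -/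

import Mathlib

open Matrix Finset

/-- `φ(λ, α, γ, K) = Σ_{k=1}^K (1 - γ(λ + α))^(k-1) λ`. -/
noncomputable def phi (lam α γ : ℝ) (K : ℕ) : ℝ :=
  ∑ k ∈ Finset.Icc 1 K, (1 - γ * (lam + α)) ^ (k - 1) * lam

lemma phi_eq_geom (lam α γ : ℝ) (K : ℕ) :
    phi lam α γ K = (∑ j ∈ Finset.range K, (1 - γ * (lam + α)) ^ j) * lam := by
  rw [phi, ← Finset.sum_mul]
  congr 1
  rw [show Finset.Icc 1 K = Finset.Ico 1 (K + 1) by rw [Finset.Ico_add_one_right_eq_Icc],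
    Finset.sum_Ico_eq_sum_range]
  simp

lemma phi_mono {x y α γ : ℝ} (K : ℕ) (hα : 0 ≤ α) (hγ : 0 ≤ γ)
    (hx : 0 < x) (hxy : x ≤ y) (hy1 : γ * (y + α) ≤ 1) :
    phi x α γ K ≤ phi y α γ K := by
  have hxa : 0 < x + α := by linarith
  have hya : 0 < y + α := by linarith
  rcases hγ.eq_or_lt with h0 | hpos
  · rw [phi, phi]
    refine Finset.sum_le_sum fun i _ => ?_
    rw [← h0]
    simpa using hxy
  · rw [phi_eq_geom, phi_eq_geom]
    have hgx : 0 < γ * (x + α) := mul_pos hpos hxa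
    have hgy : 0 < γ * (y + α) := mul_pos hpos hya
    have hsy0 : 0 ≤ 1 - γ * (y + α) := by linarith
    have hsx0 : 0 ≤ 1 - γ * (x + α) := by nlinarith
    have hsyx : 1 - γ * (y + α) ≤ 1 - γ * (x + α) := by nlinarith
    have hsx1 : 1 - γ * (x + α) ≤ 1 := by linarith
    have hpowyx : (1 - γ * (y + α)) ^ K ≤ (1 - γ * (x + α)) ^ K :=
      pow_le_pow_left₀ hsy0 hsyx K
    have hpowx1 : (1 - γ * (x + α)) ^ K ≤ 1 := pow_le_one₀ hsx0 hsx1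
    have hpowy0 : 0 ≤ (1 - γ * (y + α)) ^ K := pow_nonneg hsy0 K
    have gx : (∑ j ∈ Finset.range K, (1 - γ * (x + α)) ^ j)
        = (1 - (1 - γ * (x + α)) ^ K) / (γ * (x + α)) := by
      rw [eq_div_iff hgx.ne']
      have h := geom_sum_mul (1 - γ * (x + α)) K
      linear_combination -h
    have gy : (∑ j ∈ Finset.range K, (1 - γ * (y + α)) ^ j)
        = (1 - (1 - γ * (y + α)) ^ K) / (γ * (y + α)) := by
      rw [eq_div_iff hgy.ne']
      have h := geom_sum_mul (1 - γ * (y + α)) K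
      linear_combination -h
    rw [gx, gy, div_mul_eq_mul_div, div_mul_eq_mul_div, div_le_div_iff₀ hgx hgy]
    have hab : 1 - (1 - γ * (x + α)) ^ K ≤ 1 - (1 - γ * (y + α)) ^ K := by linarith
    have ha0 : 0 ≤ 1 - (1 - γ * (x + α)) ^ K := by linarith
    have hb0 : 0 ≤ 1 - (1 - γ * (y + α)) ^ K := by linarith
    have hcross : x * (y + α) ≤ y * (x + α) := by nlinarith
    have hxyα : 0 ≤ x * (y + α) := by positivity
    have key : (1 - (1 - γ * (x + α)) ^ K) * (x * (y + α))
        ≤ (1 - (1 - γ * (y + α)) ^ K) * (y * (x + α)) :=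
      mul_le_mul hab hcross hxyα hb0
    nlinarith [key]

theorem stmt_7 (d : ℕ) (A : Matrix (Fin d) (Fin d) ℝ) (hA : A.IsSymm)
    (μ L : ℝ) (hμ : 0 < μ) (hμL : μ ≤ L)
    (hAlow : (A - μ • (1 : Matrix (Fin d) (Fin d) ℝ)).PosSemidef)
    (hAup : (L • (1 : Matrix (Fin d) (Fin d) ℝ) - A).PosSemidef)
    (α γ : ℝ) (hα : 0 ≤ α) (K : ℕ) (hK : 1 ≤ K)
    (hγ0 : 0 ≤ γ) (hγ : γ < 1 / (L + α))
    (Q : Matrix (Fin d) (Fin d) ℝ)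
    (hQ : Q = ∑ k ∈ Finset.Icc 1 K,
      ((1 : Matrix (Fin d) (Fin d) ℝ) - γ • (A + α • 1)) ^ (k - 1)) :
    (Q * A - phi μ α γ K • (1 : Matrix (Fin d) (Fin d) ℝ)).PosSemidef ∧
    (phi L α γ K • (1 : Matrix (Fin d) (Fin d) ℝ) - Q * A).PosSemidef ∧
    ∀ χ ∈ spectrum ℝ (Q * A), phi μ α γ K ≤ χ ∧ χ ≤ phi L α γ K := by
  classical
  have hA' : A.IsHermitian := by
    rwa [Matrix.IsHermitian, Matrix.conjTranspose_eq_transpose_of_trivial]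
  set U : Matrix (Fin d) (Fin d) ℝ := (hA'.eigenvectorUnitary : Matrix (Fin d) (Fin d) ℝ) with hUdef
  have hU1 : U * star U = 1 := Matrix.mem_unitaryGroup_iff.mp hA'.eigenvectorUnitary.2
  have hU2 : star U * U = 1 := Matrix.mem_unitaryGroup_iff'.mp hA'.eigenvectorUnitary.2
  set ev : Fin d → ℝ := hA'.eigenvalues with hevdef
  have hspec : A = U * Matrix.diagonal ev * star U := by
    conv_lhs => rw [hA'.spectral_theorem]
    congr 1
  -- conjugation machinery
  have hmul : ∀ D E : Matrix (Fin d) (Fin d) ℝ,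
      (U * D * star U) * (U * E * star U) = U * (D * E) * star U := by
    intro D E
    have h1 : star U * (U * E * star U) = E * star U := by
      rw [← mul_assoc, ← mul_assoc, hU2, one_mul]
    rw [mul_assoc (U * D), h1, ← mul_assoc, mul_assoc U D E]
  have hpow : ∀ (D : Matrix (Fin d) (Fin d) ℝ) (m : ℕ),
      (U * D * star U) ^ m = U * D ^ m * star U := by
    intro D m
    induction m with
    | zero => rw [pow_zero, pow_zero, mul_one, hU1]
    | succ k ih => rw [pow_succ, pow_succ, ih, hmul]
  have hdsum : ∀ (f : ℕ → Fin d → ℝ),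
      ∑ k ∈ Finset.Icc 1 K, Matrix.diagonal (f k)
        = Matrix.diagonal (fun i => ∑ k ∈ Finset.Icc 1 K, f k i) := by
    intro f
    ext i j
    by_cases h : i = j
    · subst h; simp [Matrix.sum_apply, Matrix.diagonal_apply]
    · simp [Matrix.sum_apply, Matrix.diagonal_apply, h]
  have hbase : (1 : Matrix (Fin d) (Fin d) ℝ) - γ • (A + α • 1)
      = U * Matrix.diagonal (fun i => 1 - γ * (ev i + α)) * star U := by
    have hinner : Matrix.diagonal (fun i => 1 - γ * (ev i + α))
        = (1 : Matrix (Fin d) (Fin d) ℝ) - γ • (Matrix.diagonal ev + α • 1) := by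
      ext i j
      by_cases h : i = j
      · subst h; simp [Matrix.diagonal_apply]; ring
      · simp [Matrix.diagonal_apply, h, Matrix.one_apply_ne h]
    rw [hinner, mul_sub, sub_mul, mul_one, hU1, mul_smul_comm, smul_mul_assoc,
      mul_add, add_mul, ← hspec, mul_smul_comm, smul_mul_assoc, mul_one, hU1]
  have hQdiag : Q = U * Matrix.diagonal
      (fun i => ∑ k ∈ Finset.Icc 1 K, (1 - γ * (ev i + α)) ^ (k - 1)) * star U := by
    rw [hQ]
    have hterm : ∀ k : ℕ, ((1 : Matrix (Fin d) (Fin d) ℝ) - γ • (A + α • 1)) ^ (k - 1)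
        = U * Matrix.diagonal (fun i => (1 - γ * (ev i + α)) ^ (k - 1)) * star U := by
      intro k
      rw [hbase, hpow, Matrix.diagonal_pow]
      congr 2
    calc ∑ k ∈ Finset.Icc 1 K, ((1 : Matrix (Fin d) (Fin d) ℝ) - γ • (A + α • 1)) ^ (k - 1)
        = ∑ k ∈ Finset.Icc 1 K,
            U * Matrix.diagonal (fun i => (1 - γ * (ev i + α)) ^ (k - 1)) * star U := by
          exact Finset.sum_congr rfl fun k _ => hterm k
      _ = U * Matrix.diagonal
            (fun i => ∑ k ∈ Finset.Icc 1 K, (1 - γ * (ev i + α)) ^ (k - 1)) * star U := by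
          rw [← Finset.sum_mul, ← Finset.mul_sum, hdsum]
  have hQA : Q * A = U * Matrix.diagonal (fun i => phi (ev i) α γ K) * star U := by
    rw [hQdiag]
    conv_lhs => rw [hspec]
    rw [hmul, Matrix.diagonal_mul_diagonal]
    have hfun : (fun i => (∑ k ∈ Finset.Icc 1 K, (1 - γ * (ev i + α)) ^ (k - 1)) * ev i)
        = fun i => phi (ev i) α γ K := by
      funext i
      simp only [phi]
      rw [Finset.sum_mul]
    rw [hfun]
  -- eigenvalue bounds
  have hbounds : ∀ i, μ ≤ ev i ∧ ev i ≤ L := by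
    intro i
    set v : Fin d → ℝ := ⇑(hA'.eigenvectorBasis i) with hv
    have hAv : A *ᵥ v = ev i • v := hA'.mulVec_eigenvectorBasis i
    have hvne : v ≠ 0 := by
      have hne := hA'.eigenvectorBasis.orthonormal.ne_zero i
      intro h
      apply hne
      ext j
      exact congrFun h j
    have hvv0 : 0 ≤ v ⬝ᵥ v := Finset.sum_nonneg fun j _ => mul_self_nonneg (v j)
    have hvv : 0 < v ⬝ᵥ v :=
      lt_of_le_of_ne hvv0 fun h => hvne (dotProduct_self_eq_zero.mp h.symm)
    have hstar : star v = v := by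
      ext j; simp
    constructor
    · have h0 := hAlow.dotProduct_mulVec_nonneg v
      have heq : star v ⬝ᵥ ((A - μ • (1 : Matrix (Fin d) (Fin d) ℝ)) *ᵥ v)
          = (ev i - μ) * (v ⬝ᵥ v) := by
        rw [hstar, Matrix.sub_mulVec, hAv, Matrix.smul_mulVec, Matrix.one_mulVec,
          dotProduct_sub, dotProduct_smul, dotProduct_smul]
        simp [smul_eq_mul]; ring
      rw [heq] at h0
      nlinarith
    · have h0 := hAup.dotProduct_mulVec_nonneg v
      have heq : star v ⬝ᵥ ((L • (1 : Matrix (Fin d) (Fin d) ℝ) - A) *ᵥ v)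
          = (L - ev i) * (v ⬝ᵥ v) := by
        rw [hstar, Matrix.sub_mulVec, hAv, Matrix.smul_mulVec, Matrix.one_mulVec,
          dotProduct_sub, dotProduct_smul, dotProduct_smul]
        simp [smul_eq_mul]; ring
      rw [heq] at h0
      nlinarith
  have hLα : 0 < L + α := by linarith
  have hγL : γ * (L + α) ≤ 1 := by
    rw [lt_div_iff₀ hLα] at hγ
    linarith
  have philow : ∀ i, phi μ α γ K ≤ phi (ev i) α γ K := by
    intro i
    have h1 := (hbounds i).1
    have h2 := (hbounds i).2
    exact phi_mono K hα hγ0 hμ h1 (le_trans (by nlinarith) hγL)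
  have phihigh : ∀ i, phi (ev i) α γ K ≤ phi L α γ K := by
    intro i
    have h1 := (hbounds i).1
    have h2 := (hbounds i).2
    exact phi_mono K hα hγ0 (lt_of_lt_of_le hμ h1) h2 hγL
  have hconj_psd : ∀ f : Fin d → ℝ, (0 ≤ f) →
      (U * Matrix.diagonal f * star U).PosSemidef := by
    intro f hf
    have hd := Matrix.PosSemidef.diagonal (d := f) hf
    have := hd.mul_mul_conjTranspose_same U
    rwa [← Matrix.star_eq_conjTranspose] at this
  have hdiag_sub : ∀ (f : Fin d → ℝ) (c : ℝ),
      U * Matrix.diagonal f * star U - c • (1 : Matrix (Fin d) (Fin d) ℝ)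
        = U * Matrix.diagonal (fun i => f i - c) * star U := by
    intro f c
    have h1 : c • (1 : Matrix (Fin d) (Fin d) ℝ) = U * (c • 1) * star U := by
      rw [mul_smul_comm, smul_mul_assoc, mul_one, hU1]
    rw [h1, ← sub_mul, ← mul_sub]
    congr 2
    ext i j
    by_cases h : i = j
    · subst h; simp [Matrix.diagonal_apply]
    · simp [Matrix.diagonal_apply, h, Matrix.one_apply_ne h]
  have hpsd1 : (Q * A - phi μ α γ K • (1 : Matrix (Fin d) (Fin d) ℝ)).PosSemidef := by
    rw [hQA, hdiag_sub]
    exact hconj_psd _ fun i => sub_nonneg.mpr (philow i)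
  have hpsd2 : (phi L α γ K • (1 : Matrix (Fin d) (Fin d) ℝ) - Q * A).PosSemidef := by
    have hneg : -(Matrix.diagonal fun i => phi (ev i) α γ K - phi L α γ K)
        = Matrix.diagonal fun i => phi L α γ K - phi (ev i) α γ K := by
      ext i j
      by_cases h : i = j
      · subst h; simp [Matrix.diagonal_apply]
      · simp [Matrix.diagonal_apply, h]
    have h1 : phi L α γ K • (1 : Matrix (Fin d) (Fin d) ℝ) - Q * A
        = U * Matrix.diagonal (fun i => phi L α γ K - phi (ev i) α γ K) * star U := by
      rw [← neg_sub (Q * A), hQA, hdiag_sub, ← neg_mul, ← mul_neg, hneg]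
    rw [h1]
    exact hconj_psd _ fun i => sub_nonneg.mpr (phihigh i)
  refine ⟨hpsd1, hpsd2, ?_⟩
  intro χ hχ
  rw [hQA, hUdef, Unitary.spectrum_star_right_conjugate,
    spectrum_diagonal] at hχ
  obtain ⟨i, rfl⟩ := hχ
  exact ⟨philow i, phihigh i⟩
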